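/- Let X be a Banach space. If there exists a coarse solvent map X → ℓ_∞, then X Lipschitz embeds into ℓ_∞, i.e., there exist a map F : X → ℓ_∞ and constants c, C > 0 such that c‖x−y‖ ≤ ‖F(x) − F(y)‖ ≤ C‖x−y‖ for all x,y ∈ X. -/

import Mathlib

open Metric
open scoped ENNReal NNReal

/-- Exact compression modulus. -/
noncomputable def exactComp {M N : Type*} [PseudoMetricSpace M] [PseudoMetricSpace N]
    (f : M → N) (t : ℝ) : ℝ :=
  sInf {r : ℝ | ∃ x y : M, dist x y = t ∧ dist (f x) (f y) = r}

/-- Coarse map: the expansion modulus is finite for every t. -/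
def Coarse {M N : Type*} [PseudoMetricSpace M] [PseudoMetricSpace N] (f : M → N) : Prop :=
  ∀ t : ℝ, ∃ C : ℝ, ∀ x y : M, dist x y ≤ t → dist (f x) (f y) ≤ C

/-- Solvent map. -/
def Solvent {M N : Type*} [PseudoMetricSpace M] [PseudoMetricSpace N] (f : M → N) : Prop :=
  ∀ n : ℕ, ∃ R : ℝ, 0 < R ∧ ∀ x y : M,
    dist x y ∈ Set.Icc R (R + (n : ℝ)) → (n : ℝ) < dist (f x) (f y)

/-- Almost uncollapsed map. -/
noncomputable def AlmostUncollapsed {M N : Type*} [PseudoMetricSpace M] [PseudoMetricSpace N]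
    (f : M → N) : Prop :=
  ∃ t : ℝ, 0 < t ∧ 0 < exactComp f t

set_option maxHeartbeats 1000000
set_option synthInstance.maxHeartbeats 100000

/-- A map on a normed space whose expansion at scale 1 is bounded by `C` satisfies
`dist (f x) (f y) ≤ C * (dist x y + 1)`, by a chain of midpoints. -/
private lemma chain_bound {X : Type*} [NormedAddCommGroup X] [NormedSpace ℝ X]
    {N : Type*} [PseudoMetricSpace N] (f : X → N) {C : ℝ}
    (hC0 : 0 ≤ C) (hC : ∀ x y : X, dist x y ≤ 1 → dist (f x) (f y) ≤ C) :
    ∀ x y : X, dist (f x) (f y) ≤ C * (dist x y + 1) := by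
  have key : ∀ n : ℕ, ∀ x y : X, dist x y ≤ n → dist (f x) (f y) ≤ C * n := by
    intro n
    induction n with
    | zero =>
      intro x y h
      have hxy : x = y := eq_of_dist_eq_zero (le_antisymm (by simpa using h) dist_nonneg)
      simp [hxy]
    | succ n ih =>
      intro x y h
      rcases le_or_gt (dist x y) n with hle | hlt
      · have h1 := ih x y hle
        have : C * (n : ℝ) ≤ C * ((n : ℕ) + 1 : ℕ) := by
          push_cast
          nlinarith
        calc dist (f x) (f y) ≤ C * n := h1
          _ ≤ C * ((n : ℕ) + 1 : ℕ) := this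
      · have hd0 : (0:ℝ) < dist x y := lt_of_le_of_lt (Nat.cast_nonneg n) hlt
        set d := dist x y with hdd
        set z := x + ((n : ℝ) / d) • (y - x) with hz
        have hnd : (n : ℝ) / d ≤ 1 := by
          rw [div_le_one hd0]
          exact hlt.le
        have hnd0 : 0 ≤ (n : ℝ) / d := div_nonneg (Nat.cast_nonneg n) hd0.le
        have hxz : dist x z = n := by
          rw [dist_eq_norm]
          have : x - z = -(((n : ℝ) / d) • (y - x)) := by
            rw [hz]; abel
          rw [this, norm_neg, norm_smul, Real.norm_of_nonneg hnd0]
          have : ‖y - x‖ = d := by rw [← dist_eq_norm, dist_comm, hdd]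
          rw [this]
          field_simp
        have hzy : dist z y ≤ 1 := by
          rw [dist_eq_norm]
          have : z - y = (1 - (n : ℝ) / d) • (x - y) := by
            rw [hz]
            rw [sub_smul, one_smul, smul_sub, smul_sub]
            abel
          rw [this, norm_smul, Real.norm_of_nonneg (by linarith)]
          have hxy : ‖x - y‖ = d := by rw [← dist_eq_norm, hdd]
          rw [hxy]
          have h' : d ≤ (n : ℝ) + 1 := by
            have := h
            push_cast at this
            linarith
          have : (1 - (n : ℝ) / d) * d = d - (n : ℝ) := by field_simp
          rw [this]
          linarith
        have h1 : dist (f x) (f z) ≤ C * n := ih x z (le_of_eq hxz)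
        have h2 : dist (f z) (f y) ≤ C := hC z y hzy
        calc dist (f x) (f y) ≤ dist (f x) (f z) + dist (f z) (f y) := dist_triangle _ _ _
          _ ≤ C * n + C := add_le_add h1 h2
          _ = C * ((n : ℕ) + 1 : ℕ) := by push_cast; ring
  intro x y
  have h1 : dist x y ≤ (⌈dist x y⌉₊ : ℝ) := Nat.le_ceil _
  have h2 : (⌈dist x y⌉₊ : ℝ) ≤ dist x y + 1 := (Nat.ceil_lt_add_one dist_nonneg).le
  calc dist (f x) (f y) ≤ C * (⌈dist x y⌉₊ : ℝ) := key _ x y h1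
    _ ≤ C * (dist x y + 1) := by nlinarith

/-- If there is a coarse solvent map X → ℓ_∞, then X Lipschitz embeds into ℓ_∞. -/
theorem lipschitz_embeds_into_linfty_of_coarse_solvent
    {X : Type*} [NormedAddCommGroup X] [NormedSpace ℝ X] [CompleteSpace X]
    (f : X → lp (fun _ : ℕ => ℝ) ⊤) (h1 : Coarse f) (h2 : Solvent f) :
    ∃ (F : X → lp (fun _ : ℕ => ℝ) ⊤) (c C : ℝ), 0 < c ∧ 0 < C ∧
      ∀ x y : X, c * ‖x - y‖ ≤ ‖F x - F y‖ ∧ ‖F x - F y‖ ≤ C * ‖x - y‖ := by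
  classical
  obtain ⟨C₀, hC₀⟩ := h1 1
  set C₁ : ℝ := max C₀ 1 with hC₁def
  have hC₁pos : (0:ℝ) < C₁ := lt_of_lt_of_le one_pos (le_max_right _ _)
  have hC₁ : ∀ x y : X, dist x y ≤ 1 → dist (f x) (f y) ≤ C₁ :=
    fun x y h => (hC₀ x y h).trans (le_max_left _ _)
  have hcoarse : ∀ x y : X, dist (f x) (f y) ≤ C₁ * (dist x y + 1) :=
    chain_bound f hC₁pos.le hC₁
  -- coordinate bound in ℓ_∞
  have hcoord : ∀ (u : lp (fun _ : ℕ => ℝ) ⊤) (k : ℕ), |u k| ≤ ‖u‖ := fun u k =>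
    (Real.norm_eq_abs _) ▸ lp.norm_apply_le_norm ENNReal.top_ne_zero u k
  have hcoordsub : ∀ (u v : lp (fun _ : ℕ => ℝ) ⊤) (k : ℕ), |u k - v k| ≤ ‖u - v‖ := by
    intro u v k
    have := hcoord (u - v) k
    rwa [lp.coeFn_sub, Pi.sub_apply] at this
  -- the inf-convolution regularization g of f
  set S : X → ℕ → Set ℝ := fun x k => {r | ∃ z : X, r = f z k + 2 * C₁ * dist x z} with hS
  have hSne : ∀ x k, (S x k).Nonempty := fun x k => ⟨_, x, rfl⟩
  have hSbd : ∀ x k, ∀ r ∈ S x k, f x k - C₁ ≤ r := by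
    rintro x k r ⟨z, rfl⟩
    have hz1 : |f z k - f x k| ≤ ‖f z - f x‖ := hcoordsub _ _ _
    have hz2 : ‖f z - f x‖ ≤ C₁ * (dist x z + 1) := by
      have := hcoarse z x
      rwa [dist_eq_norm, dist_comm z x] at this
    have := abs_le.mp (hz1.trans hz2)
    have hdz : 0 ≤ dist x z := dist_nonneg
    nlinarith [this.1, this.2]
  set g : X → ℕ → ℝ := fun x k => sInf (S x k) with hg
  have hgBdd : ∀ x k, BddBelow (S x k) := fun x k => ⟨f x k - C₁, hSbd x k⟩
  have hg_le : ∀ x k, g x k ≤ f x k := by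
    intro x k
    have hmem : (f x k + 2 * C₁ * dist x x) ∈ S x k := ⟨x, rfl⟩
    have h := csInf_le (hgBdd x k) hmem
    simpa using h
  have hg_ge : ∀ x k, f x k - C₁ ≤ g x k := fun x k => le_csInf (hSne x k) (hSbd x k)
  have hg_lip1 : ∀ x y : X, ∀ k, g x k ≤ g y k + 2 * C₁ * dist x y := by
    intro x y k
    rw [← sub_le_iff_le_add]
    apply le_csInf (hSne y k)
    rintro r ⟨z, rfl⟩
    rw [sub_le_iff_le_add]
    have htri := dist_triangle x y z
    calc g x k ≤ f z k + 2 * C₁ * dist x z := csInf_le (hgBdd x k) ⟨z, rfl⟩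
      _ ≤ f z k + 2 * C₁ * dist y z + 2 * C₁ * dist x y := by nlinarith
  have hg_lip : ∀ x y : X, ∀ k, |g x k - g y k| ≤ 2 * C₁ * dist x y := by
    intro x y k
    rw [abs_sub_le_iff]
    constructor
    · linarith [hg_lip1 x y k]
    · have := hg_lip1 y x k
      rw [dist_comm y x] at this
      linarith
  -- solvent data at scale n₀
  set n₀ : ℕ := ⌈2 * C₁⌉₊ + 1 with hn₀def
  obtain ⟨R, hR0, hwin⟩ := h2 n₀
  have hn₀ge : 2 * C₁ + 1 ≤ (n₀ : ℝ) := by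
    have := Nat.le_ceil (2 * C₁)
    push_cast [hn₀def]
    linarith
  -- the pairing equivalence
  set E : ℚ × ℕ ≃ ℕ := Denumerable.eqv (ℚ × ℕ) with hE
  -- the embedding F, as a sequence
  set seq : X → ℕ → ℝ := fun x m =>
    let p := E.symm m
    if 0 < ((p.1 : ℝ)) then ((p.1 : ℝ) / R) * (g ((R / (p.1 : ℝ)) • x) p.2 - g 0 p.2)
    else 0 with hseq
  have hseq_diff : ∀ x y : X, ∀ m : ℕ, |seq x m - seq y m| ≤ 2 * C₁ * ‖x - y‖ := by
    intro x y m
    rw [hseq]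
    simp only
    by_cases hq : 0 < ((E.symm m).1 : ℝ)
    · rw [if_pos hq, if_pos hq]
      set q : ℝ := ((E.symm m).1 : ℝ)
      set k : ℕ := (E.symm m).2
      have hdiff : q / R * (g ((R / q) • x) k - g 0 k) - q / R * (g ((R / q) • y) k - g 0 k)
          = q / R * (g ((R / q) • x) k - g ((R / q) • y) k) := by ring
      rw [hdiff, abs_mul, abs_of_nonneg (by positivity : (0:ℝ) ≤ q / R)]
      have hdist : dist ((R / q) • x) ((R / q) • y) = (R / q) * ‖x - y‖ := by
        rw [dist_eq_norm, ← smul_sub, norm_smul, Real.norm_of_nonneg (by positivity)]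
      have := hg_lip ((R / q) • x) ((R / q) • y) k
      rw [hdist] at this
      calc q / R * |g ((R / q) • x) k - g ((R / q) • y) k|
          ≤ q / R * (2 * C₁ * ((R / q) * ‖x - y‖)) := by
            apply mul_le_mul_of_nonneg_left this (by positivity)
        _ = 2 * C₁ * ‖x - y‖ := by field_simp
    · rw [if_neg hq, if_neg hq]
      simp
      positivity
  have hseq_zero : ∀ m, seq 0 m = 0 := by
    intro m
    rw [hseq]
    simp only
    by_cases hq : 0 < ((E.symm m).1 : ℝ)
    · rw [if_pos hq, smul_zero, sub_self, mul_zero]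
    · rw [if_neg hq]
  have hmem : ∀ x : X, Memℓp (seq x) ⊤ := by
    intro x
    apply memℓp_infty
    refine ⟨2 * C₁ * ‖x‖, ?_⟩
    rintro r ⟨m, rfl⟩
    have := hseq_diff x 0 m
    rw [hseq_zero m, sub_zero, sub_zero] at this
    simpa [Real.norm_eq_abs] using this
  set F : X → lp (fun _ : ℕ => ℝ) ⊤ := fun x => ⟨seq x, hmem x⟩ with hF
  have hFapp : ∀ (x : X) (m : ℕ), (F x : ∀ _ : ℕ, ℝ) m = seq x m := fun x m => rfl
  have hFsub : ∀ (x y : X) (m : ℕ), ((F x - F y : lp (fun _ : ℕ => ℝ) ⊤) : ∀ _ : ℕ, ℝ) m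
      = seq x m - seq y m := by
    intro x y m
    rw [lp.coeFn_sub, Pi.sub_apply, hFapp, hFapp]
  -- upper Lipschitz bound
  have hupper : ∀ x y : X, ‖F x - F y‖ ≤ 2 * C₁ * ‖x - y‖ := by
    intro x y
    apply lp.norm_le_of_forall_le (by positivity)
    intro m
    rw [hFsub]
    simpa [Real.norm_eq_abs] using hseq_diff x y m
  -- lower bound
  have hRn : (0:ℝ) < R + n₀ := by positivity
  have hlower : ∀ x y : X, (1 / (R + n₀)) * ‖x - y‖ ≤ ‖F x - F y‖ := by
    intro x y
    rcases eq_or_ne x y with rfl | hne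
    · rw [sub_self, norm_zero, mul_zero]
      exact norm_nonneg _
    · set D : ℝ := ‖F x - F y‖ with hD
      have hDnn : (0:ℝ) ≤ D := norm_nonneg _
      set d : ℝ := ‖x - y‖ with hd
      have hd0 : 0 < d := by
        rw [hd, norm_pos_iff, sub_ne_zero]
        exact hne
      have hlt : R * d / (R + n₀) < d := by
        rw [div_lt_iff₀ hRn]
        nlinarith [hn₀ge, hC₁pos]
      obtain ⟨q, hq1, hq2⟩ := exists_rat_btwn hlt
      have hqpos : 0 < ((q : ℝ)) := lt_of_le_of_lt (by positivity) hq1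
      have hid : (R / (q:ℝ)) * ((q:ℝ) / R) = 1 := by field_simp
      have hid' : ((q:ℝ) / R) * (R / (q:ℝ)) = 1 := by field_simp
      set a : X := (R / (q : ℝ)) • x with ha
      set b : X := (R / (q : ℝ)) • y with hb
      have hab : dist a b = (R / (q : ℝ)) * d := by
        rw [ha, hb, dist_eq_norm, ← smul_sub, norm_smul, Real.norm_of_nonneg (by positivity), hd]
      have hwin' : (n₀ : ℝ) < dist (f a) (f b) := by
        apply hwin
        rw [hab]
        constructor
        · rw [div_mul_eq_mul_div, le_div_iff₀ hqpos]
          nlinarith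
        · rw [div_mul_eq_mul_div, div_le_iff₀ hqpos]
          rw [div_lt_iff₀ hRn] at hq1
          nlinarith
      -- each coordinate of f a - f b is controlled by D = ‖F x - F y‖
      have hcoordbound : ∀ k : ℕ, |f a k - f b k| ≤ (R / (q : ℝ)) * D + 2 * C₁ := by
        intro k
        set m : ℕ := E (q, k) with hm
        have hsymm : E.symm m = (q, k) := by rw [hm, Equiv.symm_apply_apply]
        have hseqx : seq x m - seq y m = ((q : ℝ) / R) * (g a k - g b k) := by
          rw [hseq]
          simp only [hsymm]
          rw [if_pos hqpos, if_pos hqpos, ha, hb]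
          ring
        have h1' : |seq x m - seq y m| ≤ D := by
          rw [hD, ← hFsub]
          exact hcoordsub _ _ _
        rw [hseqx, abs_mul, abs_of_nonneg (le_of_lt (by positivity : (0:ℝ) < (q:ℝ)/R))] at h1'
        have hgab : |g a k - g b k| ≤ (R / (q : ℝ)) * D := by
          have h2' := mul_le_mul_of_nonneg_left h1'
            (le_of_lt (show (0:ℝ) < R/(q:ℝ) by positivity))
          calc |g a k - g b k| = (R/(q:ℝ)) * ((q:ℝ)/R * |g a k - g b k|) := by
                rw [← mul_assoc, hid, one_mul]
            _ ≤ (R/(q:ℝ)) * D := h2'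
        have hA1 := hg_le a k
        have hA2 := hg_ge a k
        have hB1 := hg_le b k
        have hB2 := hg_ge b k
        have habs := abs_le.mp hgab
        rw [abs_le]
        constructor <;> linarith [habs.1, habs.2]
      have hnorm : ‖f a - f b‖ ≤ (R / (q : ℝ)) * D + 2 * C₁ := by
        apply lp.norm_le_of_forall_le
          (add_nonneg (mul_nonneg (by positivity) hDnn) (by positivity))
        intro k
        calc ‖(f a - f b : lp (fun _ : ℕ => ℝ) ⊤) k‖ = |f a k - f b k| := by
              rw [lp.coeFn_sub, Pi.sub_apply, Real.norm_eq_abs]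
          _ ≤ _ := hcoordbound k
      rw [dist_eq_norm] at hwin'
      have hkey : (n₀ : ℝ) < (R / (q : ℝ)) * D + 2 * C₁ := lt_of_lt_of_le hwin' hnorm
      have h3 : 1 < (R / (q : ℝ)) * D := by linarith [hn₀ge]
      have h4 : (q : ℝ) / R < D := by
        have h2' := mul_lt_mul_of_pos_left h3 (show (0:ℝ) < (q:ℝ)/R by positivity)
        rw [mul_one] at h2'
        calc (q:ℝ)/R < (q:ℝ)/R * ((R/(q:ℝ)) * D) := h2'
          _ = D := by rw [← mul_assoc, hid', one_mul]
      have h5 : d / (R + n₀) < (q : ℝ) / R := by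
        rw [div_lt_div_iff₀ hRn hR0]
        rw [div_lt_iff₀ hRn] at hq1
        nlinarith
      calc (1 / (R + n₀)) * d = d / (R + n₀) := by ring
        _ ≤ D := le_of_lt (lt_trans h5 h4)
  exact ⟨F, 1 / (R + n₀), 2 * C₁, by positivity, by positivity,
    fun x y => ⟨hlower x y, hupper x y⟩⟩
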